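/- arXiv:2402.17615 — 2 statements merged into one kernel-verified Lean document; each statement's English description precedes it below -/
import Mathlib

section
/- (Consensus for strongly connected graphs) If the influence graph G is strongly connected and every bias function β_{i,j} is continuous and lies in region R, then for every initial belief state B^0 ∈ [0,1]^n there exists v ∈ [0,1] such that every agent's belief converges to v: lim_{t→∞} B^t_i = v for all i. -/
open Filter

/-- A bias function `β : [-1,1] → [-1,1]` is in the receptive-resistant region R. -/
def InRegionR (β : ℝ → ℝ) : Prop :=
  (∀ x ∈ Set.Icc (-1:ℝ) 1, β x ∈ Set.Icc (-1:ℝ) 1) ∧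
  (∀ x ∈ Set.Icc (-1:ℝ) 1, x < 0 → x < β x ∧ β x < 0) ∧
  (∀ x ∈ Set.Icc (-1:ℝ) 1, 0 < x → 0 < β x ∧ β x < x) ∧
  β 0 = 0

lemma beta_le {g : ℝ → ℝ} (hR : InRegionR g) {d c : ℝ} (hd : d ∈ Set.Icc (-1:ℝ) 1)
    (hdc : d ≤ c) (hc : 0 ≤ c) : g d ≤ c := by
  rcases lt_trichotomy d 0 with h | h | h
  · linarith [(hR.2.1 d hd h).2]
  · rw [h, hR.2.2.2]; exact hc
  · linarith [(hR.2.2.1 d hd h).2]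

lemma beta_lt {g : ℝ → ℝ} (hR : InRegionR g) {d c : ℝ} (hd : d ∈ Set.Icc (-1:ℝ) 1)
    (hdc : d ≤ c) (hc : 0 < c) : g d < c := by
  rcases lt_trichotomy d 0 with h | h | h
  · linarith [(hR.2.1 d hd h).2]
  · rw [h, hR.2.2.2]; exact hc
  · linarith [(hR.2.2.1 d hd h).2]

lemma beta_ge {g : ℝ → ℝ} (hR : InRegionR g) {d c : ℝ} (hd : d ∈ Set.Icc (-1:ℝ) 1)
    (hdc : c ≤ d) (hc : c ≤ 0) : c ≤ g d := by
  rcases lt_trichotomy d 0 with h | h | h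
  · linarith [(hR.2.1 d hd h).1]
  · rw [h, hR.2.2.2]; exact hc
  · linarith [(hR.2.2.1 d hd h).1]

lemma beta_eq_zero {g : ℝ → ℝ} (hR : InRegionR g) {d : ℝ} (hd : d ∈ Set.Icc (-1:ℝ) 1)
    (h : g d = 0) : d = 0 := by
  rcases lt_trichotomy d 0 with h' | h' | h'
  · linarith [(hR.2.1 d hd h').2]
  · exact h'
  · linarith [(hR.2.2.1 d hd h').1]

noncomputable def Fstep {A : Type*} [Fintype A] (I : A → A → ℝ) (β : A → A → ℝ → ℝ)
    (x : A → ℝ) (i : A) : ℝ :=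
  x i + ∑ j ∈ Finset.univ.filter (fun j => 0 < I j i),
    (I j i / ∑ k ∈ Finset.univ.filter (fun k => 0 < I k i), I k i) * β i j (x j - x i)

section Fstep
variable {A : Type*} [Fintype A] (I : A → A → ℝ) (β : A → A → ℝ → ℝ)
  (hI : ∀ j i, 0 ≤ I j i) (hβR : ∀ i j, 0 < I j i → InRegionR (β i j))

include hI hβR

lemma Fstep_mem {x : A → ℝ} {a b : ℝ} (hx : ∀ k, x k ∈ Set.Icc a b)
    (hab : b - a ≤ 1) (i : A) : Fstep I β x i ∈ Set.Icc a b := by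
  classical
  set N := Finset.univ.filter (fun j => 0 < I j i) with hNdef
  set T := ∑ k ∈ N, I k i with hTdef
  have hT : 0 ≤ T := Finset.sum_nonneg fun k _ => hI k i
  have hxi := hx i
  have hd : ∀ j : A, x j - x i ∈ Set.Icc (-1:ℝ) 1 := fun j =>
    ⟨by linarith [(hx j).1, hxi.2], by linarith [(hx j).2, hxi.1]⟩
  have hw : ∀ j, 0 ≤ I j i / T := fun j => div_nonneg (hI j i) hT
  have hwsum : (∑ j ∈ N, I j i / T) ≤ 1 := by
    rcases eq_or_lt_of_le hT with h | h
    · simp [← h]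
    · rw [← Finset.sum_div, ← hTdef, div_self h.ne']
  constructor
  · have h1 : ∀ j ∈ N, (I j i / T) * (a - x i) ≤ (I j i / T) * β i j (x j - x i) := by
      intro j hj
      have hj' : 0 < I j i := (Finset.mem_filter.mp hj).2
      exact mul_le_mul_of_nonneg_left
        (beta_ge (hβR i j hj') (hd j) (by linarith [(hx j).1]) (by linarith [hxi.1])) (hw j)
    have h2 : (∑ j ∈ N, I j i / T) * (a - x i) ≤
        ∑ j ∈ N, (I j i / T) * β i j (x j - x i) := by
      rw [Finset.sum_mul]
      exact Finset.sum_le_sum h1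
    have h3 : (a - x i) ≤ (∑ j ∈ N, I j i / T) * (a - x i) := by
      nlinarith [hxi.1, hwsum, Finset.sum_nonneg (fun j (_ : j ∈ N) => hw j)]
    show a ≤ x i + _
    have := le_trans h3 h2
    rw [← hNdef, ← hTdef]
    linarith
  · have h1 : ∀ j ∈ N, (I j i / T) * β i j (x j - x i) ≤ (I j i / T) * (b - x i) := by
      intro j hj
      have hj' : 0 < I j i := (Finset.mem_filter.mp hj).2
      exact mul_le_mul_of_nonneg_left
        (beta_le (hβR i j hj') (hd j) (by linarith [(hx j).2]) (by linarith [hxi.2])) (hw j)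
    have h2 : (∑ j ∈ N, (I j i / T) * β i j (x j - x i)) ≤
        (∑ j ∈ N, I j i / T) * (b - x i) := by
      rw [Finset.sum_mul]
      exact Finset.sum_le_sum h1
    have h3 : (∑ j ∈ N, I j i / T) * (b - x i) ≤ b - x i := by
      nlinarith [hxi.2, hwsum, Finset.sum_nonneg (fun j (_ : j ∈ N) => hw j)]
    show x i + _ ≤ b
    have := le_trans h2 h3
    rw [← hNdef, ← hTdef]
    linarith

lemma Fstep_eq_top {x : A → ℝ} {a b : ℝ} (hx : ∀ k, x k ∈ Set.Icc a b)
    (hab : b - a ≤ 1) {i : A} (heq : Fstep I β x i = b) :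
    x i = b ∧ ∀ j, 0 < I j i → x j = b := by
  classical
  set N := Finset.univ.filter (fun j => 0 < I j i) with hNdef
  set T := ∑ k ∈ N, I k i with hTdef
  have hT : 0 ≤ T := Finset.sum_nonneg fun k _ => hI k i
  have hxi := hx i
  have hd : ∀ j : A, x j - x i ∈ Set.Icc (-1:ℝ) 1 := fun j =>
    ⟨by linarith [(hx j).1, hxi.2], by linarith [(hx j).2, hxi.1]⟩
  have hS : x i + ∑ j ∈ N, (I j i / T) * β i j (x j - x i) = b := by
    rw [← heq]; rfl
  have hxib : x i = b := by
    by_contra h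
    have hxib' : x i < b := lt_of_le_of_ne hxi.2 h
    rcases Finset.eq_empty_or_nonempty N with hNe | hNe
    · rw [hNe] at hS; simp at hS; linarith
    · have hTpos : 0 < T := Finset.sum_pos (fun k hk => (Finset.mem_filter.mp hk).2) hNe
      have hwpos : ∀ j ∈ N, 0 < I j i / T := fun j hj =>
        div_pos (Finset.mem_filter.mp hj).2 hTpos
      have h1 : (∑ j ∈ N, (I j i / T) * β i j (x j - x i)) <
          ∑ j ∈ N, (I j i / T) * (b - x i) := by
        apply Finset.sum_lt_sum_of_nonempty hNe
        intro j hj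
        have hj' : 0 < I j i := (Finset.mem_filter.mp hj).2
        exact mul_lt_mul_of_pos_left
          (beta_lt (hβR i j hj') (hd j) (by linarith [(hx j).2]) (by linarith)) (hwpos j hj)
      have h2 : (∑ j ∈ N, I j i / T) = 1 := by
        rw [← Finset.sum_div, ← hTdef, div_self hTpos.ne']
      rw [← Finset.sum_mul, h2, one_mul] at h1
      linarith
  refine ⟨hxib, fun j hj => ?_⟩
  have hjN : j ∈ N := Finset.mem_filter.mpr ⟨Finset.mem_univ j, hj⟩
  have hTpos : 0 < T := Finset.sum_pos (fun k hk => (Finset.mem_filter.mp hk).2) ⟨j, hjN⟩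
  have hsum0 : ∑ j ∈ N, (I j i / T) * β i j (x j - x i) = 0 := by linarith [hS, hxib]
  have hterms : ∀ j ∈ N, (I j i / T) * β i j (x j - x i) ≤ 0 := by
    intro j' hj'
    have hj'' : 0 < I j' i := (Finset.mem_filter.mp hj').2
    apply mul_nonpos_of_nonneg_of_nonpos (div_nonneg (hI j' i) hT)
    exact beta_le (hβR i j' hj'') (hd j') (by linarith [(hx j').2, hxib]) le_rfl
  have hz := (Finset.sum_eq_zero_iff_of_nonpos hterms).mp hsum0 j hjN
  have hwj : 0 < I j i / T := div_pos hj hTpos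
  have hβ0 : β i j (x j - x i) = 0 := by
    rcases mul_eq_zero.mp hz with h | h
    · exact absurd h hwj.ne'
    · exact h
  have := beta_eq_zero (hβR i j hj) (hd j) hβ0
  linarith [hxib]

end Fstep

theorem stmt_8 {A : Type*} [Fintype A] [Nonempty A] [DecidableEq A]
    (I : A → A → ℝ) (hI : ∀ j i, 0 ≤ I j i)
    -- strong connectivity: a directed path between any two agents
    (hconn : ∀ i j : A, Relation.ReflTransGen (fun a b => 0 < I a b) i j)
    (β : A → A → ℝ → ℝ)
    (hβR : ∀ i j, 0 < I j i → InRegionR (β i j))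
    (hβcont : ∀ i j, 0 < I j i → ContinuousOn (β i j) (Set.Icc (-1:ℝ) 1))
    (B : ℕ → A → ℝ) (hB0 : ∀ k, B 0 k ∈ Set.Icc (0:ℝ) 1)
    (hupd : ∀ t i, B (t+1) i = B t i +
      ∑ j ∈ Finset.univ.filter (fun j => 0 < I j i),
        (I j i / ∑ k ∈ Finset.univ.filter (fun k => 0 < I k i), I k i) *
          β i j (B t j - B t i)) :
    ∃ v ∈ Set.Icc (0:ℝ) 1, ∀ i, Tendsto (fun t => B t i) atTop (nhds v) := by
  classical
  have hBF : ∀ t, B (t + 1) = Fstep I β (B t) := by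
    intro t; funext i; rw [hupd t i]; rfl
  have hB01 : ∀ t, ∀ k, B t k ∈ Set.Icc (0:ℝ) 1 := by
    intro t
    induction t with
    | zero => exact hB0
    | succ t ih =>
      intro k
      rw [hBF t]
      exact Fstep_mem I β hI hβR ih (by norm_num) k
  have hne : (Finset.univ : Finset A).Nonempty := Finset.univ_nonempty
  set M : ℕ → ℝ := fun t => Finset.univ.sup' hne (B t) with hMdef
  set m : ℕ → ℝ := fun t => Finset.univ.inf' hne (B t) with hmdef
  have hBleM : ∀ t i, B t i ≤ M t := fun t i => Finset.le_sup' _ (Finset.mem_univ i)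
  have hmleB : ∀ t i, m t ≤ B t i := fun t i => Finset.inf'_le _ (Finset.mem_univ i)
  have hBmem : ∀ t, ∀ k, B t k ∈ Set.Icc (m t) (M t) := fun t k => ⟨hmleB t k, hBleM t k⟩
  have hm0 : ∀ t, 0 ≤ m t := fun t => Finset.le_inf' _ _ fun i _ => (hB01 t i).1
  have hM1 : ∀ t, M t ≤ 1 := fun t => Finset.sup'_le _ _ fun i _ => (hB01 t i).2
  have hdiff : ∀ t, M t - m t ≤ 1 := fun t => by linarith [hm0 t, hM1 t]
  have hstep : ∀ t k, B (t+1) k ∈ Set.Icc (m t) (M t) := by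
    intro t k
    rw [hBF t]
    exact Fstep_mem I β hI hβR (hBmem t) (hdiff t) k
  have hManti : Antitone M := antitone_nat_of_succ_le fun t =>
    Finset.sup'_le _ _ fun i _ => (hstep t i).2
  have hmmono : Monotone m := monotone_nat_of_le_succ fun t =>
    Finset.le_inf' _ _ fun i _ => (hstep t i).1
  set Minf : ℝ := ⨅ t, M t with hMinfdef
  set msup : ℝ := ⨆ t, m t with hmsupdef
  have hMbdd : BddBelow (Set.range M) := ⟨0, by
    rintro y ⟨t, rfl⟩
    obtain ⟨i0⟩ := ‹Nonempty A›
    exact le_trans (hB01 t i0).1 (hBleM t i0)⟩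
  have hmbdd : BddAbove (Set.range m) := ⟨1, by
    rintro y ⟨t, rfl⟩
    obtain ⟨i0⟩ := ‹Nonempty A›
    exact le_trans (hmleB t i0) (hB01 t i0).2⟩
  have hMtend : Tendsto M atTop (nhds Minf) := tendsto_atTop_ciInf hManti hMbdd
  have hmtend : Tendsto m atTop (nhds msup) := tendsto_atTop_ciSup hmmono hmbdd
  -- compactness
  set K : Set (A → ℝ) := Set.univ.pi fun _ : A => Set.Icc (0:ℝ) 1 with hKdef
  have hKc : IsCompact K := isCompact_univ_pi fun _ => isCompact_Icc
  have hBK : ∀ t, B t ∈ K := fun t k _ => hB01 t k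
  obtain ⟨L, hLK, φ, hφ, hφtend⟩ := hKc.tendsto_subseq hBK
  set y : ℕ → A → ℝ := fun s => (Fstep I β)^[s] L with hydef
  have hyK : ∀ s, y s ∈ K := by
    intro s
    induction s with
    | zero => exact hLK
    | succ s ih =>
      have : y (s+1) = Fstep I β (y s) := Function.iterate_succ_apply' _ _ _
      rw [this]
      intro k _
      exact Fstep_mem I β hI hβR (fun k' => ih k' (Set.mem_univ k')) (by norm_num) k
  have hFcont : ContinuousOn (Fstep I β) K := by
    rw [continuousOn_pi]
    intro i
    apply ContinuousOn.add (continuous_apply i).continuousOn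
    apply continuousOn_finset_sum
    intro j hj
    have hj' : 0 < I j i := (Finset.mem_filter.mp hj).2
    apply ContinuousOn.mul continuousOn_const
    apply ContinuousOn.comp (hβcont i j hj')
      (((continuous_apply j).sub (continuous_apply i)).continuousOn)
    intro x hx
    have h1 := hx j (Set.mem_univ j)
    have h2 := hx i (Set.mem_univ i)
    simp only [Set.mem_Icc] at h1 h2 ⊢
    constructor <;> linarith [h1.1, h1.2, h2.1, h2.2]
  have hytend : ∀ s, Tendsto (fun k => B (φ k + s)) atTop (nhds (y s)) := by
    intro s
    induction s with
    | zero => exact hφtend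
    | succ s ih =>
      have h1 : Tendsto (fun k => B (φ k + s)) atTop (nhdsWithin (y s) K) :=
        tendsto_nhdsWithin_of_tendsto_nhds_of_eventually_within _ ih
          (Filter.Eventually.of_forall fun k => hBK _)
      have h2 : Tendsto (fun k => Fstep I β (B (φ k + s))) atTop
          (nhds (Fstep I β (y s))) := (hFcont (y s) (hyK s)).tendsto.comp h1
      have h3 : ∀ k, B (φ k + (s+1)) = Fstep I β (B (φ k + s)) := by
        intro k
        rw [show φ k + (s+1) = (φ k + s) + 1 by ring, hBF]
      have h4 : y (s+1) = Fstep I β (y s) := Function.iterate_succ_apply' _ _ _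
      rw [h4]
      simpa only [h3] using h2
  have hytendi : ∀ s i, Tendsto (fun k => B (φ k + s) i) atTop (nhds (y s i)) :=
    fun s i => ((continuous_apply i).tendsto (y s)).comp (hytend s)
  have htops : ∀ s, Tendsto (fun k => φ k + s) atTop atTop := fun s =>
    tendsto_atTop_mono (fun k => Nat.le_add_right (φ k) s) hφ.tendsto_atTop
  have hsupy : ∀ s, Finset.univ.sup' hne (y s) = Minf := by
    intro s
    have h1 : Tendsto (fun k => M (φ k + s)) atTop
        (nhds (Finset.univ.sup' hne (y s))) := by
      have := Filter.Tendsto.finset_sup'_nhds_apply hne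
        (f := fun i k => B (φ k + s) i) (g := y s) (fun i _ => hytendi s i)
      simpa [hMdef] using this
    exact tendsto_nhds_unique h1 (hMtend.comp (htops s))
  have hinfy : ∀ s, Finset.univ.inf' hne (y s) = msup := by
    intro s
    have h1 : Tendsto (fun k => m (φ k + s)) atTop
        (nhds (Finset.univ.inf' hne (y s))) := by
      have := Filter.Tendsto.finset_inf'_nhds_apply hne
        (f := fun i k => B (φ k + s) i) (g := y s) (fun i _ => hytendi s i)
      simpa [hmdef] using this
    exact tendsto_nhds_unique h1 (hmtend.comp (htops s))
  have hyle : ∀ s i, y s i ≤ Minf := fun s i =>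
    (hsupy s) ▸ Finset.le_sup' _ (Finset.mem_univ i)
  have hy0 : ∀ s i, 0 ≤ y s i := fun s i => (hyK s i (Set.mem_univ i)).1
  have hMinf1 : Minf ≤ 1 := by
    obtain ⟨i0⟩ := ‹Nonempty A›
    exact le_trans ((hsupy 0).symm ▸ Finset.sup'_le _ _
      fun i _ => (hyK 0 i (Set.mem_univ i)).2) le_rfl
  set S : ℕ → Finset A := fun s => Finset.univ.filter (fun i => y s i = Minf) with hSdef
  have hSne : ∀ s, (S s).Nonempty := by
    intro s
    obtain ⟨i, _, hi⟩ := Finset.exists_mem_eq_sup' hne (y s)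
    exact ⟨i, Finset.mem_filter.mpr ⟨Finset.mem_univ i, by rw [← hi, hsupy s]⟩⟩
  have hSstep : ∀ s i, i ∈ S (s+1) → i ∈ S s ∧ ∀ j, 0 < I j i → j ∈ S s := by
    intro s i hi
    have hiy : Fstep I β (y s) i = Minf := by
      have h := (Finset.mem_filter.mp hi).2
      rw [← h]
      exact (congrFun (Function.iterate_succ_apply' (Fstep I β) s L) i).symm
    have hx : ∀ k, y s k ∈ Set.Icc (0:ℝ) Minf := fun k => ⟨hy0 s k, hyle s k⟩
    obtain ⟨h1, h2⟩ := Fstep_eq_top I β hI hβR hx (by linarith) hiy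
    exact ⟨Finset.mem_filter.mpr ⟨Finset.mem_univ i, h1⟩,
      fun j hj => Finset.mem_filter.mpr ⟨Finset.mem_univ j, h2 j hj⟩⟩
  have hSmono : ∀ s, S (s+1) ⊆ S s := fun s i hi => (hSstep s i hi).1
  have hstab : ∃ s0, S (s0 + 1) = S s0 := by
    by_contra h
    push_neg at h
    have hlt : ∀ s, (S (s+1)).card < (S s).card := fun s =>
      Finset.card_lt_card (lt_of_le_of_ne (Finset.le_iff_subset.mpr (hSmono s)) (h s))
    have hcard : ∀ s, (S s).card + s ≤ (S 0).card := by
      intro s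
      induction s with
      | zero => simp
      | succ s ih =>
        have := hlt s
        omega
    have h1 := hcard ((S 0).card + 1)
    have h2 := Finset.card_pos.mpr (hSne ((S 0).card + 1))
    omega
  obtain ⟨s0, hs0⟩ := hstab
  have hclosed : ∀ i ∈ S s0, ∀ j, 0 < I j i → j ∈ S s0 := by
    intro i hi j hj
    exact (hSstep s0 i (hs0 ▸ hi)).2 j hj
  obtain ⟨i0, hi0⟩ := hSne s0
  have hall : ∀ j : A, j ∈ S s0 := by
    intro j
    have h := hconn j i0
    induction h using Relation.ReflTransGen.head_induction_on with
    | refl => exact hi0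
    | head hab _ ih => exact hclosed _ ih _ hab
  have hys0 : ∀ j, y s0 j = Minf := fun j => (Finset.mem_filter.mp (hall j)).2
  have hMm : msup = Minf := by
    rw [← hinfy s0]
    apply le_antisymm
    · exact (hys0 i0) ▸ Finset.inf'_le _ (Finset.mem_univ i0)
    · exact Finset.le_inf' _ _ fun i _ => (hys0 i).symm.le
  refine ⟨Minf, ⟨?_, hMinf1⟩, ?_⟩
  · rw [← hMm]
    exact le_trans (hm0 0) (le_ciSup hmbdd 0)
  · intro i
    apply tendsto_of_tendsto_of_tendsto_of_le_of_le (hMm ▸ hmtend) hMtend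
      (fun t => hmleB t i) (fun t => hBleM t i)
end

section
/- (Consensus characterization for arbitrary graphs) Suppose every bias function is continuous and in region R. Then the whole set of agents converges to a common opinion iff there exists v ∈ [0,1] such that every source component of the influence graph converges to opinion v. -/
open Filter

/-- `S` is a source component of the directed graph with edge relation `E`:
a strongly connected component with no incoming edge from outside. -/
def IsSourceComponent {A : Type*} (E : A → A → Prop) (S : Set A) : Prop :=
  (∃ i, S = {j | Relation.ReflTransGen E i j ∧ Relation.ReflTransGen E j i}) ∧
  (∀ a b, a ∉ S → b ∈ S → ¬ E a b)

lemma regionR_le_max {β : ℝ → ℝ} (h : InRegionR β) {x : ℝ} (hx : x ∈ Set.Icc (-1:ℝ) 1) :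
    β x ≤ max x 0 := by
  rcases lt_trichotomy x 0 with h1 | h1 | h1
  · exact le_trans (h.2.1 x hx h1).2.le (le_max_right _ _)
  · simp [h1, h.2.2.2]
  · exact le_trans (h.2.2.1 x hx h1).2.le (le_max_left _ _)

lemma regionR_ge_min {β : ℝ → ℝ} (h : InRegionR β) {x : ℝ} (hx : x ∈ Set.Icc (-1:ℝ) 1) :
    min x 0 ≤ β x := by
  rcases lt_trichotomy x 0 with h1 | h1 | h1
  · exact le_trans (min_le_left _ _) (h.2.1 x hx h1).1.le
  · simp [h1, h.2.2.2]
  · exact le_trans (min_le_right _ _) (h.2.2.1 x hx h1).1.le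

lemma regionR_neg_bound {β : ℝ → ℝ} (h : InRegionR β)
    (hc : ContinuousOn β (Set.Icc (-1:ℝ) 1)) {δ : ℝ} (hδ : 0 < δ) (hδ1 : δ ≤ 1) :
    ∃ c > 0, ∀ x ∈ Set.Icc (-1:ℝ) (-δ), β x ≤ -c := by
  have hsub : Set.Icc (-1:ℝ) (-δ) ⊆ Set.Icc (-1:ℝ) 1 := by
    apply Set.Icc_subset_Icc le_rfl; linarith
  have hcpt : IsCompact (Set.Icc (-1:ℝ) (-δ)) := isCompact_Icc
  have hne : (Set.Icc (-1:ℝ) (-δ)).Nonempty := Set.nonempty_Icc.2 (by linarith)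
  obtain ⟨x0, hx0, hmax⟩ := hcpt.exists_isMaxOn hne (hc.mono hsub)
  refine ⟨-(β x0), ?_, ?_⟩
  · have := (h.2.1 x0 (hsub hx0) (by have := hx0.2; linarith)).2
    linarith
  · intro x hx
    have := hmax hx
    simpa using this

lemma exists_source_anc {A : Type*} [Fintype A] (E : A → A → Prop) (i : A) :
    ∃ S a, IsSourceComponent E S ∧ a ∈ S ∧ Relation.ReflTransGen E a i := by
  classical
  set anc : A → Set A := fun x => {y | Relation.ReflTransGen E y x} with hanc
  set f : A → ℕ := fun a => (anc a).ncard with hf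
  have hne : (Finset.univ.filter (fun a => Relation.ReflTransGen E a i)).Nonempty :=
    ⟨i, by simp [Relation.ReflTransGen.refl]⟩
  obtain ⟨a, ha, hmin⟩ := Finset.exists_min_image _ f hne
  have hai : Relation.ReflTransGen E a i := by simpa using ha
  refine ⟨{j | Relation.ReflTransGen E a j ∧ Relation.ReflTransGen E j a}, a,
    ⟨⟨a, rfl⟩, ?_⟩, ⟨.refl, .refl⟩, hai⟩
  intro b c hb hc hE
  have hba : Relation.ReflTransGen E b a := (Relation.ReflTransGen.single hE).trans hc.2
  have hle : f a ≤ f b := hmin b (by simp only [Finset.mem_filter, Finset.mem_univ, true_and]; exact hba.trans hai)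
  have hsub : anc b ⊆ anc a := fun y hy => Relation.ReflTransGen.trans hy hba
  have hab : ¬ Relation.ReflTransGen E a b := fun hab => hb ⟨hab, hba⟩
  have hss : anc b ⊂ anc a := by
    refine ⟨hsub, fun hsup => hab ?_⟩
    exact hsup (Relation.ReflTransGen.refl : a ∈ anc a)
  have : f b < f a := Set.ncard_lt_ncard hss (Set.toFinite _)
  omega

set_option linter.unusedSectionVars false
section Dyn
variable {A : Type*} [Fintype A] [Nonempty A] [DecidableEq A]

lemma Tpos (I : A → A → ℝ) (hI : ∀ j i, 0 ≤ I j i) {i : A}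
    (hne : (Finset.univ.filter (fun j => 0 < I j i)).Nonempty) :
    0 < ∑ k ∈ Finset.univ.filter (fun k => 0 < I k i), I k i := by
  obtain ⟨j, hj⟩ := hne
  exact Finset.sum_pos' (fun k _ => hI k i) ⟨j, hj, by simpa using hj⟩

lemma wsum (I : A → A → ℝ) (hI : ∀ j i, 0 ≤ I j i) {i : A}
    (hne : (Finset.univ.filter (fun j => 0 < I j i)).Nonempty) :
    ∑ j ∈ Finset.univ.filter (fun j => 0 < I j i),
      I j i / ∑ k ∈ Finset.univ.filter (fun k => 0 < I k i), I k i = 1 := by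
  rw [← Finset.sum_div]
  exact div_self (Tpos I hI hne).ne'

lemma step_refined (I : A → A → ℝ) (hI : ∀ j i, 0 ≤ I j i)
    (β : A → A → ℝ → ℝ) (hβR : ∀ i j, 0 < I j i → InRegionR (β i j))
    (B : ℕ → A → ℝ)
    (hupd : ∀ t i, B (t+1) i = B t i +
      ∑ j ∈ Finset.univ.filter (fun j => 0 < I j i),
        (I j i / ∑ k ∈ Finset.univ.filter (fun k => 0 < I k i), I k i) *
          β i j (B t j - B t i))
    (t : ℕ) (i j0 : A) (hj0 : 0 < I j0 i)
    (hrange : ∀ k, B t k ∈ Set.Icc (0:ℝ) 1)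
    (U G : ℝ) (hxU : B t i ≤ U) (hU : ∀ j, 0 < I j i → B t j ≤ U)
    (hG : β i j0 (B t j0 - B t i) ≤ G) :
    B (t+1) i ≤ B t i +
      ((1 - I j0 i / ∑ k ∈ Finset.univ.filter (fun k => 0 < I k i), I k i) * (U - B t i)
        + (I j0 i / ∑ k ∈ Finset.univ.filter (fun k => 0 < I k i), I k i) * G) := by
  classical
  set F := Finset.univ.filter (fun j => 0 < I j i) with hF
  have hj0F : j0 ∈ F := by simp [hF, hj0]
  have hne : F.Nonempty := ⟨j0, hj0F⟩
  have hT : 0 < ∑ k ∈ F, I k i := Tpos I hI hne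
  set T := ∑ k ∈ F, I k i with hTd
  set w : A → ℝ := fun j => I j i / T with hw
  have hwnn : ∀ j, 0 ≤ w j := fun j => div_nonneg (hI j i) hT.le
  have hws : ∑ j ∈ F, w j = 1 := wsum I hI hne
  rw [hupd]
  gcongr
  have hbd : ∀ j ∈ F, w j * β i j (B t j - B t i) ≤ w j * (if j = j0 then G else U - B t i) := by
    intro j hjF
    have hjpos : 0 < I j i := by simpa [hF] using hjF
    apply mul_le_mul_of_nonneg_left _ (hwnn j)
    by_cases hjj : j = j0
    · subst hjj; simpa using hG
    · simp only [if_neg hjj]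
      have hd : B t j - B t i ∈ Set.Icc (-1:ℝ) 1 := by
        have h1 := hrange j; have h2 := hrange i
        constructor <;> [linarith [h1.1, h2.2]; linarith [h1.2, h2.1]]
      refine le_trans (regionR_le_max (hβR i j hjpos) hd) ?_
      have := hU j hjpos
      exact max_le (by linarith) (by linarith)
  refine le_trans (Finset.sum_le_sum hbd) ?_
  rw [← Finset.add_sum_erase F _ hj0F]
  have : ∑ j ∈ F.erase j0, w j * (if j = j0 then G else U - B t i)
      = (1 - w j0) * (U - B t i) := by
    rw [Finset.sum_congr rfl (fun j hj => by
      rw [if_neg (Finset.ne_of_mem_erase hj)])]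
    rw [← Finset.sum_mul]
    congr 1
    have := Finset.add_sum_erase F w hj0F
    linarith [hws]
  rw [this, if_pos rfl]
  linarith

lemma step_upper (I : A → A → ℝ) (hI : ∀ j i, 0 ≤ I j i)
    (β : A → A → ℝ → ℝ) (hβR : ∀ i j, 0 < I j i → InRegionR (β i j))
    (B : ℕ → A → ℝ)
    (hupd : ∀ t i, B (t+1) i = B t i +
      ∑ j ∈ Finset.univ.filter (fun j => 0 < I j i),
        (I j i / ∑ k ∈ Finset.univ.filter (fun k => 0 < I k i), I k i) *
          β i j (B t j - B t i))
    (t : ℕ) (i : A)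
    (hrange : ∀ k, B t k ∈ Set.Icc (0:ℝ) 1)
    (U : ℝ) (hxU : B t i ≤ U) (hU : ∀ j, 0 < I j i → B t j ≤ U) :
    B (t+1) i ≤ U := by
  classical
  by_cases hne : (Finset.univ.filter (fun j => 0 < I j i)).Nonempty
  · obtain ⟨j0, hj0F⟩ := hne
    have hj0 : 0 < I j0 i := by simpa using hj0F
    have hG : β i j0 (B t j0 - B t i) ≤ U - B t i := by
      have hd : B t j0 - B t i ∈ Set.Icc (-1:ℝ) 1 := by
        have h1 := hrange j0; have h2 := hrange i
        constructor <;> [linarith [h1.1, h2.2]; linarith [h1.2, h2.1]]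
      refine le_trans (regionR_le_max (hβR i j0 hj0) hd) ?_
      have := hU j0 hj0
      exact max_le (by linarith) (by linarith)
    have := step_refined I hI β hβR B hupd t i j0 hj0 hrange U (U - B t i) hxU hU hG
    set w0 := I j0 i / ∑ k ∈ Finset.univ.filter (fun k => 0 < I k i), I k i
    nlinarith [this]
  · rw [Finset.not_nonempty_iff_eq_empty] at hne
    rw [hupd, hne]
    simpa using hxU

lemma step_lower (I : A → A → ℝ) (hI : ∀ j i, 0 ≤ I j i)
    (β : A → A → ℝ → ℝ) (hβR : ∀ i j, 0 < I j i → InRegionR (β i j))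
    (B : ℕ → A → ℝ)
    (hupd : ∀ t i, B (t+1) i = B t i +
      ∑ j ∈ Finset.univ.filter (fun j => 0 < I j i),
        (I j i / ∑ k ∈ Finset.univ.filter (fun k => 0 < I k i), I k i) *
          β i j (B t j - B t i))
    (t : ℕ) (i : A)
    (hrange : ∀ k, B t k ∈ Set.Icc (0:ℝ) 1)
    (Lo : ℝ) (hxL : Lo ≤ B t i) (hL : ∀ j, 0 < I j i → Lo ≤ B t j) :
    Lo ≤ B (t+1) i := by
  classical
  set F := Finset.univ.filter (fun j => 0 < I j i) with hF
  by_cases hne : F.Nonempty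
  · have hT : 0 < ∑ k ∈ F, I k i := Tpos I hI hne
    set T := ∑ k ∈ F, I k i with hTd
    have hws : ∑ j ∈ F, I j i / T = 1 := wsum I hI hne
    rw [hupd]
    have hbd : ∀ j ∈ F, (I j i / T) * (Lo - B t i) ≤ (I j i / T) * β i j (B t j - B t i) := by
      intro j hjF
      have hjpos : 0 < I j i := by simpa [hF] using hjF
      apply mul_le_mul_of_nonneg_left _ (div_nonneg (hI j i) hT.le)
      have hd : B t j - B t i ∈ Set.Icc (-1:ℝ) 1 := by
        have h1 := hrange j; have h2 := hrange i
        constructor <;> [linarith [h1.1, h2.2]; linarith [h1.2, h2.1]]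
      refine le_trans ?_ (regionR_ge_min (hβR i j hjpos) hd)
      have := hL j hjpos
      exact le_min (by linarith) (by linarith)
    have := Finset.sum_le_sum hbd
    rw [← Finset.sum_mul, hws, one_mul] at this
    linarith
  · rw [Finset.not_nonempty_iff_eq_empty] at hne
    rw [hupd, hF] at *
    rw [hne]
    simpa using hxL


set_option maxHeartbeats 1000000 in
lemma keyA (I : A → A → ℝ) (hI : ∀ j i, 0 ≤ I j i)
    (β : A → A → ℝ → ℝ) (hβR : ∀ i j, 0 < I j i → InRegionR (β i j))
    (hβcont : ∀ i j, 0 < I j i → ContinuousOn (β i j) (Set.Icc (-1:ℝ) 1))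
    (B : ℕ → A → ℝ)
    (hupd : ∀ t i, B (t+1) i = B t i +
      ∑ j ∈ Finset.univ.filter (fun j => 0 < I j i),
        (I j i / ∑ k ∈ Finset.univ.filter (fun k => 0 < I k i), I k i) *
          β i j (B t j - B t i))
    (hrangeAll : ∀ t k, B t k ∈ Set.Icc (0:ℝ) 1)
    (L : ℝ)
    (hMten : Tendsto (fun t => Finset.univ.sup' Finset.univ_nonempty (B t)) atTop (nhds L))
    (i j0 : A) (hj0 : 0 < I j0 i)
    (hHi : ∀ ε > 0, ∃ᶠ t in atTop, L - ε < B t i)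
    (ε : ℝ) (hε : 0 < ε) :
    ∃ᶠ t in atTop, L - ε < B t j0 := by
  classical
  by_contra hcon
  rw [not_frequently] at hcon
  have hev0 : ∀ᶠ t in atTop, B t j0 ≤ L - ε := by
    filter_upwards [hcon] with t ht; push_neg at ht; exact ht
  set ε0 : ℝ := min ε 1 with hε0d
  have hε0 : 0 < ε0 := lt_min hε one_pos
  have hε01 : ε0 ≤ 1 := min_le_right _ _
  have hev : ∀ᶠ t in atTop, B t j0 ≤ L - ε0 := by
    filter_upwards [hev0] with t ht
    have : ε0 ≤ ε := min_le_left _ _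
    linarith
  set δ : ℝ := ε0 / 2 with hδd
  have hδ : 0 < δ := by positivity
  obtain ⟨c, hc, hcb⟩ := regionR_neg_bound (hβR i j0 hj0) (hβcont i j0 hj0) hδ
    (by rw [hδd]; linarith)
  set F := Finset.univ.filter (fun j => 0 < I j i) with hFd
  have hj0F : j0 ∈ F := by simp [hFd, hj0]
  have hT : 0 < ∑ k ∈ F, I k i := Tpos I hI ⟨j0, hj0F⟩
  set w0 : ℝ := I j0 i / ∑ k ∈ F, I k i with hw0d
  have hw0 : 0 < w0 := div_pos hj0 hT
  have hw01 : w0 ≤ 1 := by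
    rw [hw0d, div_le_one hT]
    exact Finset.single_le_sum (fun k _ => hI k i) hj0F
  set η : ℝ := w0 * c / 2 with hηd
  have hη : 0 < η := by positivity
  set a : ℝ := w0 * c / 2 with had
  have ha : 0 < a := by positivity
  set εf : ℝ := w0 * min η (ε0 / 2) / 2 with hεfd
  have hεf : 0 < εf := by positivity
  have hεf1 : 2 * εf ≤ w0 * η := by
    rw [hεfd]
    have h1 : min η (ε0/2) ≤ η := min_le_left _ _
    nlinarith
  have hεf2 : 2 * εf ≤ w0 * (ε0 / 2) := by
    rw [hεfd]
    have h1 : min η (ε0/2) ≤ ε0/2 := min_le_right _ _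
    nlinarith
  set N : ℝ := L - ε0 with hNd
  have hMev : ∀ᶠ t in atTop, ∀ j, B t j ≤ L + εf := by
    filter_upwards [hMten.eventually (gt_mem_nhds (by linarith : L < L + εf))] with t ht j
    exact le_trans (Finset.le_sup' (B t) (Finset.mem_univ j)) ht.le
  have key : ∀ᶠ t in atTop, B (t+1) i ≤ max (B t i - a) (L - εf) := by
    filter_upwards [hMev, hev] with t hMt hjt
    have hxU : B t i ≤ L + εf := hMt i
    have hU : ∀ j, 0 < I j i → B t j ≤ L + εf := fun j _ => hMt j
    by_cases hc1 : N + δ ≤ B t i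
    · have hG : β i j0 (B t j0 - B t i) ≤ -c := by
        apply hcb
        constructor
        · have h1 := (hrangeAll t j0).1; have h2 := (hrangeAll t i).2; linarith
        · rw [hNd] at hc1; linarith
      have hstep := step_refined I hI β hβR B hupd t i j0 hj0 (hrangeAll t)
        (L + εf) (-c) hxU hU hG
      rw [← hFd, ← hw0d] at hstep
      rcases le_or_gt (L + εf - η) (B t i) with hx2 | hx2
      · refine le_trans ?_ (le_max_left _ _)
        nlinarith [hstep, mul_nonneg hw0.le (by linarith : (0:ℝ) ≤ L + εf - B t i)]
      · refine le_trans ?_ (le_max_right _ _)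
        nlinarith [hstep, mul_le_mul_of_nonneg_left (by linarith : η ≤ L + εf - B t i) hw0.le,
          mul_nonneg hw0.le hc.le]
    · push_neg at hc1
      have hG : β i j0 (B t j0 - B t i) ≤ N + δ - B t i := by
        have hd : B t j0 - B t i ∈ Set.Icc (-1:ℝ) 1 := by
          have h1 := hrangeAll t j0; have h2 := hrangeAll t i
          constructor
          · have := h1.1; have := h2.2; simp only [Set.mem_Icc] at *; linarith
          · have := h1.2; have := h2.1; simp only [Set.mem_Icc] at *; linarith
        refine le_trans (regionR_le_max (hβR i j0 hj0) hd) (max_le ?_ ?_)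
        · rw [hNd]; linarith
        · linarith
      have hstep := step_refined I hI β hβR B hupd t i j0 hj0 (hrangeAll t)
        (L + εf) (N + δ - B t i) hxU hU hG
      rw [← hFd, ← hw0d] at hstep
      refine le_trans ?_ (le_max_right _ _)
      rw [hNd, hδd] at hstep
      nlinarith [hstep, mul_nonneg hw0.le hεf.le]
  obtain ⟨T0, hT0⟩ := eventually_atTop.1 key
  obtain ⟨n0, hn0⟩ := exists_nat_ge ((1 - (L - εf)) / a)
  have hn0' : 1 - (n0:ℝ) * a ≤ L - εf := by
    rw [div_le_iff₀ ha] at hn0; linarith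
  have h2 : ∀ n : ℕ, B (T0 + n) i ≤ max (B T0 i - n * a) (L - εf) := by
    intro n; induction n with
    | zero => simp
    | succ n ih =>
      have step := hT0 (T0 + n) (Nat.le_add_right _ _)
      have heq : T0 + (n+1) = (T0+n)+1 := rfl
      rw [heq]
      refine le_trans step (max_le ?_ (le_max_right _ _))
      rcases max_cases (B T0 i - (n:ℝ)*a) (L - εf) with ⟨hm, _⟩ | ⟨hm, _⟩
      · rw [hm] at ih
        refine le_trans ?_ (le_max_left _ _)
        push_cast; linarith
      · rw [hm] at ih
        refine le_trans ?_ (le_max_right _ _)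
        linarith
  have haux : ∀ m : ℕ, B (T0 + n0 + m) i ≤ L - εf := by
    intro m; induction m with
    | zero =>
      have h := h2 n0
      have hb : B T0 i - (n0:ℝ) * a ≤ L - εf := by
        have := (hrangeAll T0 i).2; linarith
      exact le_trans h (max_le hb le_rfl)
    | succ m ihm =>
      have step := hT0 (T0+n0+m) (by omega)
      have heq : T0+n0+(m+1) = (T0+n0+m)+1 := rfl
      rw [heq]
      exact le_trans step (max_le (by linarith) le_rfl)
  have h3 : ∀ᶠ t in atTop, B t i ≤ L - εf :=
    eventually_atTop.2 ⟨T0+n0, fun t ht => by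
      obtain ⟨m, rfl⟩ := Nat.exists_eq_add_of_le ht
      exact haux m⟩
  obtain ⟨t, h4, h5⟩ := ((hHi εf hεf).and_eventually h3).exists
  linarith

lemma rangeAll (I : A → A → ℝ) (hI : ∀ j i, 0 ≤ I j i)
    (β : A → A → ℝ → ℝ) (hβR : ∀ i j, 0 < I j i → InRegionR (β i j))
    (B : ℕ → A → ℝ) (hB0 : ∀ k, B 0 k ∈ Set.Icc (0:ℝ) 1)
    (hupd : ∀ t i, B (t+1) i = B t i +
      ∑ j ∈ Finset.univ.filter (fun j => 0 < I j i),
        (I j i / ∑ k ∈ Finset.univ.filter (fun k => 0 < I k i), I k i) *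
          β i j (B t j - B t i)) :
    ∀ t k, B t k ∈ Set.Icc (0:ℝ) 1 := by
  intro t
  induction t with
  | zero => exact hB0
  | succ t ih =>
    intro k
    exact ⟨step_lower I hI β hβR B hupd t k ih 0 (ih k).1 (fun j _ => (ih j).1),
      step_upper I hI β hβR B hupd t k ih 1 (ih k).2 (fun j _ => (ih j).2)⟩

lemma maxTendsto (I : A → A → ℝ) (hI : ∀ j i, 0 ≤ I j i)
    (β : A → A → ℝ → ℝ) (hβR : ∀ i j, 0 < I j i → InRegionR (β i j))
    (hβcont : ∀ i j, 0 < I j i → ContinuousOn (β i j) (Set.Icc (-1:ℝ) 1))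
    (B : ℕ → A → ℝ) (hB0 : ∀ k, B 0 k ∈ Set.Icc (0:ℝ) 1)
    (hupd : ∀ t i, B (t+1) i = B t i +
      ∑ j ∈ Finset.univ.filter (fun j => 0 < I j i),
        (I j i / ∑ k ∈ Finset.univ.filter (fun k => 0 < I k i), I k i) *
          β i j (B t j - B t i))
    (v : ℝ)
    (hv : ∀ S : Set A, IsSourceComponent (fun a b => 0 < I a b) S →
      ∀ i ∈ S, Tendsto (fun t => B t i) atTop (nhds v)) :
    Tendsto (fun t => Finset.univ.sup' Finset.univ_nonempty (B t)) atTop (nhds v) := by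
  classical
  have hrangeAll := rangeAll I hI β hβR B hB0 hupd
  set Mx : ℕ → ℝ := fun t => Finset.univ.sup' Finset.univ_nonempty (B t) with hMxd
  have hle : ∀ t k, B t k ≤ Mx t := fun t k => Finset.le_sup' (B t) (Finset.mem_univ k)
  have hanti : Antitone Mx := by
    apply antitone_nat_of_succ_le
    intro t
    exact Finset.sup'_le _ _ (fun i _ =>
      step_upper I hI β hβR B hupd t i (hrangeAll t) (Mx t) (hle t i) (fun j _ => hle t j))
  have hbdd : BddBelow (Set.range Mx) := by
    refine ⟨0, ?_⟩
    rintro y ⟨t, rfl⟩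
    exact le_trans (hrangeAll t (Classical.arbitrary A)).1 (hle t _)
  have hMten : Tendsto Mx atTop (nhds (⨅ t, Mx t)) := tendsto_atTop_ciInf hanti hbdd
  set L : ℝ := ⨅ t, Mx t with hLd
  have hLle : ∀ t, L ≤ Mx t := fun t => ciInf_le hbdd t
  -- an agent attaining the max infinitely often
  have hexW : ∃ i, ∃ᶠ t in atTop, B t i = Mx t := by
    by_contra hcon
    push_neg at hcon
    have hall : ∀ᶠ t in atTop, ∀ i, ¬ B t i = Mx t := eventually_all.2 hcon
    obtain ⟨t, ht⟩ := hall.exists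
    obtain ⟨i, _, hi⟩ := Finset.exists_mem_eq_sup' (Finset.univ_nonempty (α := A)) (B t)
    exact ht i hi.symm
  obtain ⟨istar, histar⟩ := hexW
  set P : A → Prop := fun j => ∀ ε > 0, ∃ᶠ t in atTop, L - ε < B t j with hPd
  have hPistar : P istar := by
    intro ε hε
    refine histar.mono ?_
    intro t ht
    rw [ht]
    have := hLle t
    linarith
  -- closure of P under ancestors
  have hclose : ∀ b, Relation.ReflTransGen (fun a b => 0 < I a b) b istar → P b := by
    intro b hb
    induction hb using Relation.ReflTransGen.head_induction_on with
    | refl => exact hPistar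
    | head h' _ ih =>
      rename_i a' c' _
      intro ε hε
      exact keyA I hI β hβR hβcont B hupd hrangeAll L hMten c' a' h' ih ε hε
  obtain ⟨S, a0, hS, ha0S, ha0i⟩ := exists_source_anc (fun a b => 0 < I a b) istar
  have hPa0 : P a0 := hclose a0 ha0i
  have hten : Tendsto (fun t => B t a0) atTop (nhds v) := hv S hS a0 ha0S
  have hvL : L ≤ v := by
    by_contra hlt
    push_neg at hlt
    have hε : 0 < (L - v) / 2 := by linarith
    have hevv : ∀ᶠ t in atTop, B t a0 < L - (L - v)/2 :=
      hten.eventually (gt_mem_nhds (by linarith))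
    obtain ⟨t, h1, h2⟩ := ((hPa0 _ hε).and_eventually hevv).exists
    linarith
  have hvU : v ≤ L := le_of_tendsto_of_tendsto' hten hMten (fun t => hle t a0)
  have : L = v := le_antisymm hvL hvU
  rw [← this]
  exact hMten

lemma sup'_one_sub (f : A → ℝ) :
    Finset.univ.sup' Finset.univ_nonempty (fun i => 1 - f i)
      = 1 - Finset.univ.inf' Finset.univ_nonempty f := by
  apply le_antisymm
  · apply Finset.sup'_le
    intro i hi
    have := Finset.inf'_le f hi
    linarith
  · obtain ⟨i, hi, hE⟩ := Finset.exists_mem_eq_inf' (Finset.univ_nonempty (α := A)) f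
    rw [hE]
    exact Finset.le_sup' (fun i => 1 - f i) hi

end Dyn

theorem stmt_9 {A : Type*} [Fintype A] [Nonempty A] [DecidableEq A]
    (I : A → A → ℝ) (hI : ∀ j i, 0 ≤ I j i)
    (β : A → A → ℝ → ℝ)
    (hβR : ∀ i j, 0 < I j i → InRegionR (β i j))
    (hβcont : ∀ i j, 0 < I j i → ContinuousOn (β i j) (Set.Icc (-1:ℝ) 1))
    (B : ℕ → A → ℝ) (hB0 : ∀ k, B 0 k ∈ Set.Icc (0:ℝ) 1)
    (hupd : ∀ t i, B (t+1) i = B t i +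
      ∑ j ∈ Finset.univ.filter (fun j => 0 < I j i),
        (I j i / ∑ k ∈ Finset.univ.filter (fun k => 0 < I k i), I k i) *
          β i j (B t j - B t i)) :
    (∃ v ∈ Set.Icc (0:ℝ) 1, ∀ i, Tendsto (fun t => B t i) atTop (nhds v)) ↔
    (∃ v ∈ Set.Icc (0:ℝ) 1, ∀ S : Set A,
      IsSourceComponent (fun a b => 0 < I a b) S →
      ∀ i ∈ S, Tendsto (fun t => B t i) atTop (nhds v)) := by
  constructor
  · rintro ⟨v, hvI, hall⟩
    exact ⟨v, hvI, fun S _ i _ => hall i⟩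
  · rintro ⟨v, hvI, hv⟩
    refine ⟨v, hvI, ?_⟩
    have hmax := maxTendsto I hI β hβR hβcont B hB0 hupd v hv
    set B' : ℕ → A → ℝ := fun t i => 1 - B t i with hB'd
    set β' : A → A → ℝ → ℝ := fun i j y => -(β i j (-y)) with hβ'd
    have hβR' : ∀ i j, 0 < I j i → InRegionR (β' i j) := by
      intro i j hij
      obtain ⟨h1, h2, h3, h4⟩ := hβR i j hij
      refine ⟨?_, ?_, ?_, ?_⟩
      · intro x hx
        have hx' : -x ∈ Set.Icc (-1:ℝ) 1 := ⟨by linarith [hx.2], by linarith [hx.1]⟩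
        have := h1 (-x) hx'
        exact ⟨by simp only [hβ'd]; linarith [this.2], by simp only [hβ'd]; linarith [this.1]⟩
      · intro x hx hxneg
        have hx' : -x ∈ Set.Icc (-1:ℝ) 1 := ⟨by linarith [hx.2], by linarith [hx.1]⟩
        have := h3 (-x) hx' (by linarith)
        exact ⟨by simp only [hβ'd]; linarith [this.2], by simp only [hβ'd]; linarith [this.1]⟩
      · intro x hx hxpos
        have hx' : -x ∈ Set.Icc (-1:ℝ) 1 := ⟨by linarith [hx.2], by linarith [hx.1]⟩
        have := h2 (-x) hx' (by linarith)
        exact ⟨by simp only [hβ'd]; linarith [this.2], by simp only [hβ'd]; linarith [this.1]⟩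
      · simp only [hβ'd, neg_zero, h4]
    have hβcont' : ∀ i j, 0 < I j i → ContinuousOn (β' i j) (Set.Icc (-1:ℝ) 1) := by
      intro i j hij
      have hmap : Set.MapsTo (fun y : ℝ => -y) (Set.Icc (-1:ℝ) 1) (Set.Icc (-1:ℝ) 1) := by
        intro x hx
        simp only [Set.mem_Icc] at *
        constructor <;> linarith
      exact ((hβcont i j hij).comp continuous_neg.continuousOn hmap).neg
    have hB0' : ∀ k, B' 0 k ∈ Set.Icc (0:ℝ) 1 :=
      fun k => ⟨by simp only [hB'd]; linarith [(hB0 k).2], by simp only [hB'd]; linarith [(hB0 k).1]⟩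
    have hupd' : ∀ t i, B' (t+1) i = B' t i +
        ∑ j ∈ Finset.univ.filter (fun j => 0 < I j i),
          (I j i / ∑ k ∈ Finset.univ.filter (fun k => 0 < I k i), I k i) *
            β' i j (B' t j - B' t i) := by
      intro t i
      simp only [hB'd, hβ'd]
      rw [hupd t i]
      have hsum : ∑ j ∈ Finset.univ.filter (fun j => 0 < I j i),
          (I j i / ∑ k ∈ Finset.univ.filter (fun k => 0 < I k i), I k i) *
            -(β i j (-((1 - B t j) - (1 - B t i))))
          = - ∑ j ∈ Finset.univ.filter (fun j => 0 < I j i),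
            (I j i / ∑ k ∈ Finset.univ.filter (fun k => 0 < I k i), I k i) *
              β i j (B t j - B t i) := by
        rw [← Finset.sum_neg_distrib]
        apply Finset.sum_congr rfl
        intro j _
        have harg : -((1 - B t j) - (1 - B t i)) = B t j - B t i := by ring
        rw [harg]
        ring
      rw [hsum]
      ring
    have hmin' := maxTendsto I hI β' hβR' hβcont' B' hB0' hupd' (1 - v)
      (fun S hSc i hiS => tendsto_const_nhds.sub (hv S hSc i hiS))
    have hminB : Tendsto (fun t => Finset.univ.inf' Finset.univ_nonempty (B t)) atTop (nhds v) := by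
      have heq : (fun t => Finset.univ.inf' Finset.univ_nonempty (B t))
          = fun t => 1 - (Finset.univ.sup' Finset.univ_nonempty (B' t)) := by
        funext t
        have : Finset.univ.sup' Finset.univ_nonempty (B' t)
            = Finset.univ.sup' Finset.univ_nonempty (fun i => 1 - B t i) := rfl
        rw [this, sup'_one_sub (B t)]
        ring
      rw [heq]
      have h1 : Tendsto (fun t => 1 - (Finset.univ.sup' Finset.univ_nonempty (B' t)))
          atTop (nhds (1 - (1 - v))) :=
        (tendsto_const_nhds (x := (1:ℝ))).sub hmin'
      simpa using h1
    intro i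
    apply tendsto_of_tendsto_of_tendsto_of_le_of_le hminB hmax
    · intro t; exact Finset.inf'_le (B t) (Finset.mem_univ i)
    · intro t; exact Finset.le_sup' (B t) (Finset.mem_univ i)
end
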